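/- arXiv:2002.09050 — 2 statements merged into one kernel-verified Lean document; each statement's English description precedes it below -/
import Mathlib

section
/- (Lemma 1) Let f be p-times differentiable with L_p-Lipschitz p-th derivative, H_p > 0, γ ∈ [0,1), and suppose T ∈ ℝⁿ satisfies ‖∇_y Ω̃_{p,H_p}(f,x;T)‖ ≤ γ‖∇f(T)‖. Then (1−γ)‖∇f(T)‖ ≤ ((p+1)H_p + L_p)/p! · ‖T − x‖^p, and consequently ‖∇_y Ω̃_{p,H_p}(f,x;T)‖ ≤ γ/(1−γ) · ((p+1)H_p + L_p)/p! · ‖T − x‖^p. -/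
set_option maxHeartbeats 1000000
set_option linter.unusedSectionVars false
set_option linter.unusedVariables false

open Fin Finset Set

section Helpers
variable {E : Type} [NormedAddCommGroup E] [NormedSpace ℝ E]

lemma update_const_last (k : ℕ) (u v : E) :
    Function.update (fun _ : Fin (k+1) => u) (Fin.last k) v = Fin.snoc (fun _ : Fin k => u) v := by
  ext i
  induction i using Fin.lastCases with
  | last => simp
  | cast j =>
    rw [Function.update_of_ne (Fin.castSucc_lt_last j).ne, Fin.snoc_castSucc]

lemma snoc_const (k : ℕ) (u : E) :
    (Fin.snoc (fun _ : Fin k => u) u : Fin (k+1) → E) = fun _ => u := by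
  ext i
  induction i using Fin.lastCases with
  | last => simp
  | cast j => simp

lemma swapLast (k : ℕ) {G : Type} [NormedAddCommGroup G] [NormedSpace ℝ G]
    (f : E → G) (hf : ContDiff ℝ (↑(k+2)) f) (x : E)
    (m : Fin k → E) (a b : E) :
    iteratedFDeriv ℝ (k+2) f x (Fin.snoc (Fin.snoc m a) b)
      = iteratedFDeriv ℝ (k+2) f x (Fin.snoc (Fin.snoc m b) a) := by
  have e1 : ∀ c d : E, iteratedFDeriv ℝ (k+2) f x (Fin.snoc (Fin.snoc m c) d)
      = iteratedFDeriv ℝ k (fderiv ℝ (fderiv ℝ f)) x m c d := by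
    intro c d
    rw [iteratedFDeriv_succ_apply_right]
    rw [Fin.init_snoc, Fin.snoc_last]
    rw [iteratedFDeriv_succ_apply_right]
    rw [Fin.init_snoc, Fin.snoc_last]
  rw [e1, e1]
  have hG₂ : ContDiff ℝ (↑k) (fderiv ℝ (fderiv ℝ f)) := by
    apply ContDiff.fderiv_right (m := (k : WithTop ℕ∞))
    · apply ContDiff.fderiv_right (m := ((k : WithTop ℕ∞) + 1)) hf
      norm_cast
    · norm_cast
  have key : ∀ c d : E, iteratedFDeriv ℝ k (fderiv ℝ (fderiv ℝ f)) x m c d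
      = iteratedFDeriv ℝ k (fun y => fderiv ℝ (fderiv ℝ f) y c d) x m := by
    intro c d
    set Φ : (E →L[ℝ] (E →L[ℝ] G)) →L[ℝ] G :=
      (ContinuousLinearMap.apply ℝ G d).comp (ContinuousLinearMap.apply ℝ (E →L[ℝ] G) c) with hΦ
    have := Φ.iteratedFDeriv_comp_left (hG₂.contDiffAt (x := x)) (le_refl (k : WithTop ℕ∞))
    have h2 : iteratedFDeriv ℝ k (⇑Φ ∘ fderiv ℝ (fderiv ℝ f)) x m
        = Φ (iteratedFDeriv ℝ k (fderiv ℝ (fderiv ℝ f)) x m) := by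
      rw [this]; rfl
    have h3 : (⇑Φ ∘ fderiv ℝ (fderiv ℝ f)) = fun y => fderiv ℝ (fderiv ℝ f) y c d := rfl
    rw [h3] at h2
    rw [h2]
    rfl
  rw [key, key]
  have : (fun y => fderiv ℝ (fderiv ℝ f) y a b) = (fun y => fderiv ℝ (fderiv ℝ f) y b a) := by
    funext y
    exact (hf.contDiffAt.isSymmSndFDerivAt (by rw [minSmoothness_of_isRCLikeNormedField]; exact_mod_cast (by omega : 2 ≤ k+2))) a b
  rw [this]

lemma diagDeriv (k : ℕ) : ∀ {G : Type} [NormedAddCommGroup G] [NormedSpace ℝ G]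
    (f : E → G), ContDiff ℝ (↑(k+1)) f → ∀ (x T : E),
    HasFDerivAt (fun z => iteratedFDeriv ℝ (k+1) f x (fun _ => z - x))
      (((k:ℝ)+1) • (iteratedFDeriv ℝ (k+1) f x).toContinuousLinearMap
        (fun _ => T - x) (Fin.last k)) T := by
  induction k with
  | zero =>
    intro G _ _ f hf x T
    have hfun : (fun z => iteratedFDeriv ℝ 1 f x (fun _ => z - x))
        = fun z => fderiv ℝ f x (z - x) := by
      funext z
      rw [iteratedFDeriv_one_apply]
    rw [hfun]
    have h1 : HasFDerivAt (fun z => fderiv ℝ f x (z - x)) (fderiv ℝ f x) T := by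
      have := (fderiv ℝ f x).hasFDerivAt (x := T - x)
      have h2 := this.comp T ((hasFDerivAt_id T).sub_const x)
      simpa [Function.comp_def, map_sub] using h2
    convert h1 using 1
    ext v
    simp only [ContinuousLinearMap.smul_apply,
      ContinuousMultilinearMap.toContinuousLinearMap_apply]
    rw [show (((0:ℕ):ℝ)+1) = 1 by norm_num, one_smul]
    rw [iteratedFDeriv_one_apply]
    congr 1
  | succ k IH =>
    intro G _ _ f hf x T
    set u := T - x with hu
    set F := fderiv ℝ f with hF
    have hfF : ContDiff ℝ (↑(k+1)) F := by
      apply hf.fderiv_right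
      norm_cast
    have hψ := IH F hfF x T
    have hB : HasFDerivAt (fun z => z - x) (ContinuousLinearMap.id ℝ E) T :=
      (hasFDerivAt_id T).sub_const x
    have happ := hψ.clm_apply hB
    have hfun : (fun z => iteratedFDeriv ℝ (k+2) f x (fun _ => z - x))
        = fun z => (iteratedFDeriv ℝ (k+1) F x (fun _ => z - x)) (z - x) := by
      funext z
      rw [show ((fun _ => z - x) : Fin (k+2) → E) = Fin.snoc (fun _ : Fin (k+1) => z - x) (z - x) from (snoc_const _ _).symm]
      rw [iteratedFDeriv_succ_apply_right, Fin.init_snoc, Fin.snoc_last]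
    rw [hfun]
    convert happ using 1
    ext v
    -- key scalar identity
    have key : ∀ w : Fin (k+2) → E, iteratedFDeriv ℝ (k+2) f x w
        = iteratedFDeriv ℝ (k+1) F x (Fin.init w) (w (Fin.last (k+1))) := fun w =>
      iteratedFDeriv_succ_apply_right w
    have e1 : (iteratedFDeriv ℝ (k+1) F x (fun _ => u)) v
        = iteratedFDeriv ℝ (k+2) f x (Fin.snoc (fun _ : Fin (k+1) => u) v) := by
      rw [key, Fin.init_snoc, Fin.snoc_last]
    have e2 : (iteratedFDeriv ℝ (k+1) F x (Fin.snoc (fun _ : Fin k => u) v)) u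
        = iteratedFDeriv ℝ (k+2) f x (Fin.snoc (fun _ : Fin (k+1) => u) v) := by
      have h := key (Fin.snoc (Fin.snoc (fun _ : Fin k => u) v) u)
      rw [Fin.init_snoc, Fin.snoc_last] at h
      rw [← h, swapLast k f hf x (fun _ => u) v u, snoc_const]
    -- LHS
    rw [ContinuousLinearMap.smul_apply, ContinuousMultilinearMap.toContinuousLinearMap_apply,
      update_const_last]
    -- RHS
    rw [ContinuousLinearMap.add_apply, ContinuousLinearMap.comp_apply,
      ContinuousLinearMap.coe_id', id_eq, ContinuousLinearMap.flip_apply,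
      ContinuousLinearMap.smul_apply, ContinuousMultilinearMap.toContinuousLinearMap_apply,
      update_const_last, ContinuousLinearMap.smul_apply]
    rw [e1, e2]
    rw [show (((k+1:ℕ)):ℝ) + 1 = 1 + (((k:ℕ):ℝ)+1) by push_cast; ring, add_smul, one_smul]

lemma taylorRem (m : ℕ) : ∀ {G : Type} [NormedAddCommGroup G] [NormedSpace ℝ G]
    (F : E → G), ContDiff ℝ (↑m) F → ∀ (L : ℝ), 0 ≤ L →
    (∀ a b : E, ‖iteratedFDeriv ℝ m F a - iteratedFDeriv ℝ m F b‖ ≤ L * ‖a - b‖) →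
    ∀ (x y : E),
    ‖F y - ∑ k ∈ Finset.range (m+1),
        ((Nat.factorial k : ℝ))⁻¹ • iteratedFDeriv ℝ k F x (fun _ => y - x)‖
      ≤ L / (Nat.factorial (m+1) : ℝ) * ‖y - x‖ ^ (m+1) := by
  induction m with
  | zero =>
    intro G _ _ F hF L hL0 hL x y
    have h0 : ∀ z : E, iteratedFDeriv ℝ 0 F z =
        (continuousMultilinearCurryFin0 ℝ E G).symm (F z) := by
      intro z; rw [iteratedFDeriv_zero_eq_comp]; rfl
    have h1 := hL x y
    rw [h0, h0] at h1
    rw [← LinearIsometryEquiv.map_sub, LinearIsometryEquiv.norm_map] at h1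
    simp only [zero_add, Finset.range_one, Finset.sum_singleton, Nat.factorial_zero,
      Nat.factorial_one, Nat.cast_one, inv_one, one_smul, iteratedFDeriv_zero_apply,
      pow_one, div_one]
    rw [norm_sub_rev (F y), norm_sub_rev y x]
    exact h1
  | succ m IH =>
    intro G _ _ F hF L hL0 hL x y
    set u := y - x with hu
    -- the derivative function
    set Fd := fderiv ℝ F with hFd
    have hFd' : ContDiff ℝ (↑m) Fd := hF.fderiv_right (by norm_cast)
    have hFdL : ∀ a b : E, ‖iteratedFDeriv ℝ m Fd a - iteratedFDeriv ℝ m Fd b‖ ≤ L * ‖a - b‖ := by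
      intro a b
      have ea : iteratedFDeriv ℝ (m+1) F a
          = (continuousMultilinearCurryRightEquiv' ℝ m E G).symm (iteratedFDeriv ℝ m Fd a) := by
        rw [iteratedFDeriv_succ_eq_comp_right]; rfl
      have eb : iteratedFDeriv ℝ (m+1) F b
          = (continuousMultilinearCurryRightEquiv' ℝ m E G).symm (iteratedFDeriv ℝ m Fd b) := by
        rw [iteratedFDeriv_succ_eq_comp_right]; rfl
      have := hL a b
      rw [ea, eb] at this
      rwa [← LinearIsometryEquiv.map_sub, LinearIsometryEquiv.norm_map] at this
    have IH' := IH Fd hFd' L hL0 hFdL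
    -- constants
    set c : ℕ → G := fun k => iteratedFDeriv ℝ k F x (fun _ => u) with hc
    set d : ℕ → (E →L[ℝ] G) := fun j => iteratedFDeriv ℝ j Fd x (fun _ => u) with hd
    have hdc : ∀ j : ℕ, (d j) u = c (j+1) := by
      intro j
      have := iteratedFDeriv_succ_apply_right (𝕜 := ℝ) (f := F) (x := x) (n := j)
        (fun _ => u)
      rw [hc, hd]
      simp only []
      rw [this]
      congr 1
    -- the auxiliary function h
    set h : ℝ → G := fun t => F (x + t • u) - ∑ k ∈ Finset.range (m+2),
      (t ^ k / (Nat.factorial k : ℝ)) • c k with hh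
    set h' : ℝ → G := fun t => fderiv ℝ F (x + t • u) u - ∑ j ∈ Finset.range (m+1),
      (t ^ j / (Nat.factorial j : ℝ)) • (d j) u with hh'
    have hder : ∀ t : ℝ, HasDerivAt h (h' t) t := by
      intro t
      have hline : HasDerivAt (fun s : ℝ => x + s • u) u t := by
        simpa using ((hasDerivAt_id t).smul_const u).const_add x
      have hcomp : HasDerivAt (fun s : ℝ => F (x + s • u)) (fderiv ℝ F (x + t • u) u) t := by
        have hdF : HasFDerivAt F (fderiv ℝ F (x + t • u)) (x + t • u) :=
          (hF.differentiable (by norm_cast)).differentiableAt.hasFDerivAt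
        exact hdF.comp_hasDerivAt t hline
      have hpoly : HasDerivAt (fun s : ℝ => ∑ k ∈ Finset.range (m+2),
          (s ^ k / (Nat.factorial k : ℝ)) • c k)
          (∑ j ∈ Finset.range (m+1), (t ^ j / (Nat.factorial j : ℝ)) • (d j) u) t := by
        have each : ∀ k ∈ Finset.range (m+2), HasDerivAt
            (fun s : ℝ => (s ^ k / (Nat.factorial k : ℝ)) • c k)
            (((k : ℝ) * t ^ (k-1) / (Nat.factorial k : ℝ)) • c k) t := by
          intro k _
          have : HasDerivAt (fun s : ℝ => s ^ k / (Nat.factorial k : ℝ))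
              ((k : ℝ) * t ^ (k-1) / (Nat.factorial k : ℝ)) t :=
            (hasDerivAt_pow k t).div_const _
          exact this.smul_const (c k)
        have hsum := HasDerivAt.fun_sum each
        convert hsum using 1
        rw [Finset.sum_range_succ' (fun k => ((k : ℝ) * t ^ (k-1) / (Nat.factorial k : ℝ)) • c k) (m+1)]
        simp only [Nat.cast_zero, zero_mul, zero_div, zero_smul, add_zero]
        apply Finset.sum_congr rfl
        intro j _
        rw [hdc j]
        congr 1
        rw [Nat.factorial_succ]
        push_cast
        have hj : (Nat.factorial j : ℝ) ≠ 0 := by positivity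
        field_simp
      exact hcomp.sub hpoly
    -- bound on ‖h' t‖ for t ∈ [0,1]
    have hbound : ∀ t ∈ Ico (0:ℝ) 1, ‖h' t‖
        ≤ (L * ‖u‖ ^ (m+2) / (Nat.factorial (m+1) : ℝ)) * t ^ (m+1) := by
      intro t ht
      have ht0 : 0 ≤ t := ht.1
      have key : h' t = (fderiv ℝ F (x + t • u) - ∑ j ∈ Finset.range (m+1),
          (t ^ j / (Nat.factorial j : ℝ)) • d j) u := by
        rw [hh']
        simp [ContinuousLinearMap.sub_apply, ContinuousLinearMap.sum_apply]
      have hIH := IH' x (x + t • u)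
      rw [show x + t • u - x = t • u by abel] at hIH
      have hsum_eq : ∑ j ∈ Finset.range (m+1),
          ((Nat.factorial j : ℝ))⁻¹ • iteratedFDeriv ℝ j Fd x (fun _ => t • u)
          = ∑ j ∈ Finset.range (m+1), (t ^ j / (Nat.factorial j : ℝ)) • d j := by
        apply Finset.sum_congr rfl
        intro j _
        have : iteratedFDeriv ℝ j Fd x (fun _ => t • u) = t ^ j • d j := by
          rw [hd]
          have := (iteratedFDeriv ℝ j Fd x).map_smul_univ (fun _ => t) (fun _ => u)
          simpa using this
        rw [this, smul_smul]
        congr 1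
        rw [div_eq_mul_inv, mul_comm]
      rw [hsum_eq] at hIH
      have hn : ‖t • u‖ ^ (m+1) = t ^ (m+1) * ‖u‖ ^ (m+1) := by
        rw [norm_smul, Real.norm_eq_abs, abs_of_nonneg ht0, mul_pow]
      rw [hn] at hIH
      calc ‖h' t‖ = ‖(fderiv ℝ F (x + t • u) - ∑ j ∈ Finset.range (m+1),
            (t ^ j / (Nat.factorial j : ℝ)) • d j) u‖ := by rw [key]
        _ ≤ ‖fderiv ℝ F (x + t • u) - ∑ j ∈ Finset.range (m+1),
            (t ^ j / (Nat.factorial j : ℝ)) • d j‖ * ‖u‖ := ContinuousLinearMap.le_opNorm _ _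
        _ ≤ (L / (Nat.factorial (m+1) : ℝ) * (t ^ (m+1) * ‖u‖ ^ (m+1))) * ‖u‖ := by
            apply mul_le_mul_of_nonneg_right _ (norm_nonneg u)
            exact hIH
        _ = (L * ‖u‖ ^ (m+2) / (Nat.factorial (m+1) : ℝ)) * t ^ (m+1) := by ring
    -- apply the comparison theorem
    set B : ℝ → ℝ := fun t => (L * ‖u‖ ^ (m+2) / (Nat.factorial (m+2) : ℝ)) * t ^ (m+2) with hB
    have hBder : ∀ t : ℝ, HasDerivAt B
        ((L * ‖u‖ ^ (m+2) / (Nat.factorial (m+1) : ℝ)) * t ^ (m+1)) t := by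
      intro t
      have := (hasDerivAt_pow (m+2) t).const_mul (L * ‖u‖ ^ (m+2) / (Nat.factorial (m+2) : ℝ))
      refine this.congr_deriv ?_
      rw [Nat.factorial_succ (m+1)]
      push_cast
      have h1 : (Nat.factorial (m+1) : ℝ) ≠ 0 := by positivity
      have h2 : ((m:ℝ) + 2) ≠ 0 := by positivity
      field_simp
      ring
    have h0 : h 0 = 0 := by
      show F (x + (0:ℝ) • u) - ∑ k ∈ Finset.range (m+2),
        ((0:ℝ) ^ k / (Nat.factorial k : ℝ)) • c k = 0
      rw [Finset.sum_eq_single 0]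
      · simp [hc]
      · intro k _ hk
        rcases Nat.exists_eq_succ_of_ne_zero hk with ⟨j, rfl⟩
        simp [pow_succ]
      · intro habs; simp at habs
    have hmain := image_norm_le_of_norm_deriv_right_le_deriv_boundary
      (f := h) (f' := h') (a := 0) (b := 1)
      (fun t _ => (hder t).continuousAt.continuousWithinAt)
      (fun t _ => (hder t).hasDerivWithinAt)
      (B := B) (by rw [h0]; simp [hB]) (fun t => hBder t) hbound
      (Set.right_mem_Icc.2 zero_le_one)
    rw [hh, hB] at hmain
    simp only [one_pow, mul_one] at hmain
    have : F (x + (1:ℝ) • u) = F y := by rw [one_smul, hu]; congr 1; abel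
    rw [this] at hmain
    calc ‖F y - ∑ k ∈ Finset.range (m+1+1),
        ((Nat.factorial k : ℝ))⁻¹ • iteratedFDeriv ℝ k F x (fun _ => y - x)‖
        = ‖F y - ∑ k ∈ Finset.range (m+2), ((1:ℝ) / (Nat.factorial k : ℝ)) • c k‖ := by
          congr 2
          apply Finset.sum_congr rfl
          intro k _
          rw [hc, one_div]
      _ ≤ L * ‖u‖ ^ (m+2) / (Nat.factorial (m+2) : ℝ) := hmain
      _ = L / (Nat.factorial (m+1+1) : ℝ) * ‖y - x‖ ^ (m+1+1) := by rw [hu]; ring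

lemma P_hasFDerivAt (p : ℕ) (f : E → ℝ) (hf : ContDiff ℝ (↑p) f) (x T : E) :
    HasFDerivAt (fun z => ∑ k ∈ Finset.range (p + 1),
        (1 / (Nat.factorial k : ℝ)) * iteratedFDeriv ℝ k f x (fun _ => z - x))
      (∑ j ∈ Finset.range p, ((Nat.factorial j : ℝ))⁻¹ •
        iteratedFDeriv ℝ j (fderiv ℝ f) x (fun _ => T - x)) T := by
  have hfun : (fun z => ∑ k ∈ Finset.range (p + 1),
      (1 / (Nat.factorial k : ℝ)) * iteratedFDeriv ℝ k f x (fun _ => z - x))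
      = fun z => (∑ j ∈ Finset.range p,
        (1 / (Nat.factorial (j+1) : ℝ)) * iteratedFDeriv ℝ (j+1) f x (fun _ => z - x)) + f x := by
    funext z
    rw [Finset.sum_range_succ' (fun k => (1 / (Nat.factorial k : ℝ))
      * iteratedFDeriv ℝ k f x (fun _ => z - x)) p]
    congr 1
    simp [iteratedFDeriv_zero_apply]
  rw [hfun]
  apply HasFDerivAt.add_const
  have each : ∀ j ∈ Finset.range p, HasFDerivAt
      (fun z => (1 / (Nat.factorial (j+1) : ℝ)) * iteratedFDeriv ℝ (j+1) f x (fun _ => z - x))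
      (((Nat.factorial j : ℝ))⁻¹ • iteratedFDeriv ℝ j (fderiv ℝ f) x (fun _ => T - x)) T := by
    intro j hj
    have hj' : j + 1 ≤ p := Finset.mem_range.1 hj
    have hfj : ContDiff ℝ (↑(j+1)) f := hf.of_le (by exact_mod_cast hj')
    have hdd := (diagDeriv j f hfj x T).const_mul (1 / (Nat.factorial (j+1) : ℝ))
    refine hdd.congr_fderiv ?_
    ext v
    rw [ContinuousLinearMap.smul_apply, ContinuousLinearMap.smul_apply,
      ContinuousLinearMap.smul_apply, ContinuousMultilinearMap.toContinuousLinearMap_apply,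
      update_const_last]
    have e1 : iteratedFDeriv ℝ (j+1) f x (Fin.snoc (fun _ : Fin j => T - x) v)
        = (iteratedFDeriv ℝ j (fderiv ℝ f) x (fun _ => T - x)) v := by
      rw [iteratedFDeriv_succ_apply_right, Fin.init_snoc, Fin.snoc_last]
    rw [e1]
    have hfact : (Nat.factorial (j+1) : ℝ) = ((j:ℝ)+1) * (Nat.factorial j : ℝ) := by
      rw [Nat.factorial_succ]; push_cast; ring
    have hne : (Nat.factorial j : ℝ) ≠ 0 := by positivity
    have hne2 : ((j:ℝ)+1) ≠ 0 := by positivity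
    simp only [smul_eq_mul, hfact]
    field_simp
  exact HasFDerivAt.fun_sum each

end Helpers

section Euclid
variable {n : ℕ}

local notation "E'" => EuclideanSpace ℝ (Fin n)

lemma norm_gradient_eq (f : E' → ℝ) (T : E') : ‖gradient f T‖ = ‖fderiv ℝ f T‖ := by
  show ‖(InnerProductSpace.toDual ℝ E').symm (fderiv ℝ f T)‖ = ‖fderiv ℝ f T‖
  rw [LinearIsometryEquiv.norm_map]

lemma normPow_hasFDerivAt (p : ℕ) (hp : 1 ≤ p) (x T : E') :
    ∃ W' : E' →L[ℝ] ℝ, HasFDerivAt (fun z : E' => ‖z - x‖ ^ (p+1)) W' T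
      ∧ ‖W'‖ ≤ ((p:ℝ)+1) * ‖T - x‖ ^ p := by
  by_cases hTx : T = x
  · refine ⟨0, ?_, by rw [norm_zero]; positivity⟩
    subst hTx
    rw [hasFDerivAt_iff_isLittleO_nhds_zero]
    have heq : ∀ h : E', T + h - T = h := fun h => by abel
    simp only [heq, sub_self, norm_zero, zero_pow (Nat.succ_ne_zero p),
      ContinuousLinearMap.zero_apply, sub_zero]
    rw [Asymptotics.isLittleO_iff]
    intro ε hε
    have hmem : Metric.ball (0:E') (min ε 1) ∈ nhds (0:E') :=
      Metric.ball_mem_nhds _ (lt_min hε one_pos)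
    filter_upwards [hmem] with h hh
    rw [Metric.mem_ball, dist_zero_right] at hh
    have h1 : ‖h‖ ≤ 1 := le_of_lt (lt_of_lt_of_le hh (min_le_right _ _))
    have h2 : ‖h‖ ^ p ≤ ‖h‖ ^ 1 := pow_le_pow_of_le_one (norm_nonneg _) h1 hp
    rw [pow_one] at h2
    have h3 : ‖h‖ ≤ ε := le_of_lt (lt_of_lt_of_le hh (min_le_left _ _))
    rw [Real.norm_eq_abs, abs_of_nonneg (pow_nonneg (norm_nonneg h) _)]
    calc ‖h‖ ^ (p+1) = ‖h‖ ^ p * ‖h‖ := by rw [pow_succ]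
      _ ≤ ε * ‖h‖ := by
          apply mul_le_mul_of_nonneg_right _ (norm_nonneg _)
          exact le_trans h2 h3
  · set N : E' → ℝ := fun z => ‖z - x‖ with hN
    have hdiff : DifferentiableAt ℝ N T := by
      apply DifferentiableAt.norm ℝ
      · exact (differentiable_id.sub_const x).differentiableAt
      · exact sub_ne_zero.2 hTx
    have hlip : LipschitzWith 1 N := LipschitzWith.of_dist_le_mul fun a b => by
      rw [Real.dist_eq, dist_eq_norm]
      push_cast
      rw [one_mul]
      have h1 := abs_norm_sub_norm_le (a - x) (b - x)
      have h2 : a - x - (b - x) = a - b := by abel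
      rw [h2] at h1
      exact h1
    have hbnd : ‖fderiv ℝ N T‖ ≤ 1 := by
      have := hdiff.hasFDerivAt.le_of_lipschitz hlip
      simpa using this
    have hpow : HasDerivAt (fun t : ℝ => t ^ (p+1)) (((p:ℝ)+1) * (N T) ^ p) (N T) := by
      have := hasDerivAt_pow (p+1) (N T)
      simpa using this
    have hcomp := hpow.comp_hasFDerivAt T hdiff.hasFDerivAt
    refine ⟨_, hcomp, ?_⟩
    have hsm : ‖(((p:ℝ)+1) * N T ^ p) • fderiv ℝ N T‖ ≤ ‖((p:ℝ)+1) * N T ^ p‖ * ‖fderiv ℝ N T‖ :=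
      ContinuousLinearMap.opNorm_smul_le _ _
    apply le_trans hsm
    have h1 : ‖((p:ℝ)+1) * (N T) ^ p‖ = ((p:ℝ)+1) * ‖T - x‖ ^ p := by
      rw [Real.norm_eq_abs, abs_of_nonneg (by positivity)]
    rw [h1]
    calc ((p:ℝ)+1) * ‖T - x‖ ^ p * ‖fderiv ℝ N T‖
        ≤ ((p:ℝ)+1) * ‖T - x‖ ^ p * 1 := by
          apply mul_le_mul_of_nonneg_left hbnd (by positivity)
      _ = ((p:ℝ)+1) * ‖T - x‖ ^ p := by ring
end Euclid

theorem stmt_3 (n p : ℕ) (hp : 1 ≤ p) (L Hp γ : ℝ) (hHp : 0 < Hp)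
    (hγ0 : 0 ≤ γ) (hγ1 : γ < 1)
    (f : EuclideanSpace ℝ (Fin n) → ℝ)
    (hf : ContDiff ℝ p f)
    (hL : ∀ x y : EuclideanSpace ℝ (Fin n),
      ‖iteratedFDeriv ℝ p f x - iteratedFDeriv ℝ p f y‖ ≤ L * ‖x - y‖)
    (x T : EuclideanSpace ℝ (Fin n))
    (hT : ‖gradient (fun z => (∑ k ∈ Finset.range (p + 1),
          (1 / (Nat.factorial k : ℝ)) * iteratedFDeriv ℝ k f x (fun _ => z - x))
        + Hp / (Nat.factorial p : ℝ) * ‖z - x‖ ^ (p + 1)) T‖ ≤ γ * ‖gradient f T‖) :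
    (1 - γ) * ‖gradient f T‖ ≤ ((p + 1) * Hp + L) / (Nat.factorial p : ℝ) * ‖T - x‖ ^ p
    ∧ ‖gradient (fun z => (∑ k ∈ Finset.range (p + 1),
          (1 / (Nat.factorial k : ℝ)) * iteratedFDeriv ℝ k f x (fun _ => z - x))
        + Hp / (Nat.factorial p : ℝ) * ‖z - x‖ ^ (p + 1)) T‖
      ≤ γ / (1 - γ) * (((p + 1) * Hp + L) / (Nat.factorial p : ℝ)) * ‖T - x‖ ^ p := by
  have hγ' : 0 < 1 - γ := by linarith
  have hfactp : (0:ℝ) < (Nat.factorial p : ℝ) := by positivity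
  rcases Nat.eq_zero_or_pos n with hn | hn
  · -- degenerate case: the space is a single point
    subst hn
    have hsub : Subsingleton (EuclideanSpace ℝ (Fin 0)) :=
      inferInstance
    have hfder : ∀ g : EuclideanSpace ℝ (Fin 0) → ℝ, fderiv ℝ g T = 0 := by
      intro g
      apply ContinuousLinearMap.ext
      intro v
      rw [@Subsingleton.elim _ hsub v 0]
      simp
    have hzero : ∀ g : EuclideanSpace ℝ (Fin 0) → ℝ, ‖gradient g T‖ = 0 := by
      intro g
      rw [norm_gradient_eq, hfder, norm_zero]
    have hTx : T - x = 0 := @Subsingleton.elim _ hsub _ _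
    have hnorm0 : ‖T - x‖ ^ p = 0 := by
      rw [hTx, norm_zero, zero_pow (by omega)]
    constructor
    · rw [hzero, hnorm0, mul_zero, mul_zero]
    · rw [hzero, hnorm0, mul_zero]
  -- main case
  have hL0 : 0 ≤ L := by
    have hab : (EuclideanSpace.single (⟨0, hn⟩ : Fin n) (1:ℝ)) ≠ 0 := by
      intro hcon
      have := congrArg (fun v : EuclideanSpace ℝ (Fin n) => v ⟨0, hn⟩) hcon
      simp [EuclideanSpace.single] at this
    have h1 := hL (EuclideanSpace.single (⟨0, hn⟩ : Fin n) (1:ℝ)) 0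
    have h2 : (0:ℝ) < ‖EuclideanSpace.single (⟨0, hn⟩ : Fin n) (1:ℝ) - 0‖ := by
      rw [sub_zero, norm_pos_iff]
      exact hab
    nlinarith [norm_nonneg (iteratedFDeriv ℝ p f (EuclideanSpace.single (⟨0, hn⟩ : Fin n) (1:ℝ))
      - iteratedFDeriv ℝ p f 0)]
  obtain ⟨m, rfl⟩ : ∃ m, p = m + 1 := ⟨p - 1, (Nat.succ_pred_eq_of_pos hp).symm⟩
  have hF' : ContDiff ℝ (↑m) (fderiv ℝ f) := hf.fderiv_right (by norm_cast)
  have hL' : ∀ a b : EuclideanSpace ℝ (Fin n),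
      ‖iteratedFDeriv ℝ m (fderiv ℝ f) a - iteratedFDeriv ℝ m (fderiv ℝ f) b‖ ≤ L * ‖a - b‖ := by
    intro a b
    have ea : iteratedFDeriv ℝ (m+1) f a
        = (continuousMultilinearCurryRightEquiv' ℝ m (EuclideanSpace ℝ (Fin n)) ℝ).symm
          (iteratedFDeriv ℝ m (fderiv ℝ f) a) := by
      rw [iteratedFDeriv_succ_eq_comp_right]; rfl
    have eb : iteratedFDeriv ℝ (m+1) f b
        = (continuousMultilinearCurryRightEquiv' ℝ m (EuclideanSpace ℝ (Fin n)) ℝ).symm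
          (iteratedFDeriv ℝ m (fderiv ℝ f) b) := by
      rw [iteratedFDeriv_succ_eq_comp_right]; rfl
    have h1 := hL a b
    rw [ea, eb, ← LinearIsometryEquiv.map_sub, LinearIsometryEquiv.norm_map] at h1
    exact h1
  have hE1 := taylorRem m (fderiv ℝ f) hF' L hL0 hL' x T
  set S : EuclideanSpace ℝ (Fin n) →L[ℝ] ℝ := ∑ j ∈ Finset.range (m+1),
    ((Nat.factorial j : ℝ))⁻¹ • iteratedFDeriv ℝ j (fderiv ℝ f) x (fun _ => T - x) with hS
  have hP := P_hasFDerivAt (m+1) f hf x T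
  obtain ⟨W', hW', hWn⟩ := normPow_hasFDerivAt (m+1) (by omega) x T
  have hMod : HasFDerivAt (fun z => (∑ k ∈ Finset.range (m + 1 + 1),
      (1 / (Nat.factorial k : ℝ)) * iteratedFDeriv ℝ k f x (fun _ => z - x))
      + Hp / (Nat.factorial (m+1) : ℝ) * ‖z - x‖ ^ (m + 1 + 1))
      (S + (Hp / (Nat.factorial (m+1) : ℝ)) • W') T := hP.add (hW'.const_mul _)
  have hgM : ‖gradient (fun z => (∑ k ∈ Finset.range (m + 1 + 1),
      (1 / (Nat.factorial k : ℝ)) * iteratedFDeriv ℝ k f x (fun _ => z - x))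
      + Hp / (Nat.factorial (m+1) : ℝ) * ‖z - x‖ ^ (m + 1 + 1)) T‖
      = ‖S + (Hp / (Nat.factorial (m+1) : ℝ)) • W'‖ := by
    rw [norm_gradient_eq, hMod.fderiv]
  set A := ‖fderiv ℝ f T‖ with hA
  have hgf : ‖gradient f T‖ = A := norm_gradient_eq f T
  rw [hgM, hgf] at hT
  have hWc : ‖(Hp / (Nat.factorial (m+1) : ℝ)) • W'‖
      ≤ Hp / (Nat.factorial (m+1) : ℝ) * (((m:ℝ)+1+1) * ‖T - x‖ ^ (m+1)) := by
    have h1 : ‖(Hp / (Nat.factorial (m+1) : ℝ)) • W'‖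
        ≤ ‖(Hp / (Nat.factorial (m+1) : ℝ))‖ * ‖W'‖ := ContinuousLinearMap.opNorm_smul_le _ _
    apply le_trans h1
    rw [Real.norm_eq_abs, abs_of_pos (by positivity)]
    apply mul_le_mul_of_nonneg_left _ (by positivity)
    have h2 : ((m+1:ℕ):ℝ) + 1 = (m:ℝ)+1+1 := by push_cast; ring
    rw [← h2]
    exact hWn
  -- main estimate
  have hmain : (1 - γ) * A
      ≤ (((m:ℝ)+1+1) * Hp + L) / (Nat.factorial (m+1) : ℝ) * ‖T - x‖ ^ (m+1) := by
    have t1 : A ≤ ‖fderiv ℝ f T - (S + (Hp / (Nat.factorial (m+1) : ℝ)) • W')‖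
        + ‖S + (Hp / (Nat.factorial (m+1) : ℝ)) • W'‖ := by
      have := norm_add_le (fderiv ℝ f T - (S + (Hp / (Nat.factorial (m+1) : ℝ)) • W'))
        (S + (Hp / (Nat.factorial (m+1) : ℝ)) • W')
      rwa [sub_add_cancel] at this
    have t2 : ‖fderiv ℝ f T - (S + (Hp / (Nat.factorial (m+1) : ℝ)) • W')‖
        ≤ ‖fderiv ℝ f T - S‖ + ‖(Hp / (Nat.factorial (m+1) : ℝ)) • W'‖ := by
      have heq : fderiv ℝ f T - (S + (Hp / (Nat.factorial (m+1) : ℝ)) • W')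
          = (fderiv ℝ f T - S) - (Hp / (Nat.factorial (m+1) : ℝ)) • W' := by abel
      rw [heq]
      exact norm_sub_le _ _
    have talg : (((m:ℝ)+1+1) * Hp + L) / (Nat.factorial (m+1) : ℝ) * ‖T - x‖ ^ (m+1)
        = Hp / (Nat.factorial (m+1) : ℝ) * (((m:ℝ)+1+1) * ‖T - x‖ ^ (m+1))
          + L / (Nat.factorial (m+1) : ℝ) * ‖T - x‖ ^ (m+1) := by
      field_simp
    rw [talg]
    linarith [hE1, hWc, hT, t1, t2]
  have hcast : ((m+1:ℕ):ℝ) + 1 = (m:ℝ)+1+1 := by push_cast; ring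
  constructor
  · rw [hgf, hcast]
    exact hmain
  · rw [hgM]
    have h2 : A ≤ (((m:ℝ)+1+1) * Hp + L) / (Nat.factorial (m+1) : ℝ) * ‖T - x‖ ^ (m+1) / (1 - γ) := by
      rw [le_div_iff₀ hγ']
      calc A * (1 - γ) = (1 - γ) * A := by ring
        _ ≤ _ := hmain
    calc ‖S + (Hp / (Nat.factorial (m+1) : ℝ)) • W'‖ ≤ γ * A := hT
      _ ≤ γ * ((((m:ℝ)+1+1) * Hp + L) / (Nat.factorial (m+1) : ℝ) * ‖T - x‖ ^ (m+1) / (1 - γ)) :=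
          mul_le_mul_of_nonneg_left h2 hγ0
      _ = γ / (1 - γ) * ((((((m+1:ℕ):ℝ)) + 1) * Hp + L) / (Nat.factorial (m+1) : ℝ)) * ‖T - x‖ ^ (m+1) := by
          rw [hcast]
          have h1γ : (1 - γ) ≠ 0 := ne_of_gt hγ'
          have hc : (Nat.factorial (m+1):ℝ) ≠ 0 := ne_of_gt hfactp
          field_simp
end

section
/- Let f be convex and three times differentiable with L_3-Lipschitz third derivative, and fix x̃. The function φ(z) = ⟨∇f(x̃), z−x̃⟩ + (1/2)∇²f(x̃)[z−x̃]² + (1/6)D³f(x̃)[z−x̃]³ + (L_3/4)‖z−x̃‖⁴, with the regularization coefficient M ≥ L_3 replacing L_3 in the last term (i.e. coefficient M/4 with M ≥ L_3), is convex. -/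
set_option maxHeartbeats 1000000

open RealInnerProductSpace

theorem stmt_12 (n : ℕ) (L M : ℝ) (hM : L ≤ M)
    (f : EuclideanSpace ℝ (Fin n) → ℝ)
    (hconv : ConvexOn ℝ Set.univ f)
    (hf : ContDiff ℝ 3 f)
    (hL : ∀ x y : EuclideanSpace ℝ (Fin n),
      ‖iteratedFDeriv ℝ 3 f x - iteratedFDeriv ℝ 3 f y‖ ≤ L * ‖x - y‖)
    (xt : EuclideanSpace ℝ (Fin n)) :
    ConvexOn ℝ Set.univ (fun z =>
      ⟪gradient f xt, z - xt⟫
      + (1 / 2) * iteratedFDeriv ℝ 2 f xt (fun _ => z - xt)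
      + (1 / 6) * iteratedFDeriv ℝ 3 f xt (fun _ => z - xt)
      + M / 4 * ‖z - xt‖ ^ 4) := by
  classical
  -- trivial case n = 0
  rcases Nat.eq_zero_or_pos n with hn | hn
  · subst hn
    refine ⟨convex_univ, ?_⟩
    intro x _ y _ a b ha hb hab
    have hxy : x = y := Subsingleton.elim x y
    subst hxy
    simp only [smul_eq_mul]
    rw [Convex.combo_self hab x, ← add_mul, hab, one_mul]
  set φ : EuclideanSpace ℝ (Fin n) → ℝ := fun z =>
      ⟪gradient f xt, z - xt⟫
      + (1 / 2) * iteratedFDeriv ℝ 2 f xt (fun _ => z - xt)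
      + (1 / 6) * iteratedFDeriv ℝ 3 f xt (fun _ => z - xt)
      + M / 4 * ‖z - xt‖ ^ 4 with hφ
  -- now n ≥ 1, extract L ≥ 0
  have hL0 : 0 ≤ L := by
    have h1 := hL (EuclideanSpace.single ⟨0, hn⟩ (1:ℝ)) 0
    have h2 : ‖EuclideanSpace.single (⟨0, hn⟩ : Fin n) (1:ℝ) - 0‖ = 1 := by
      simp [EuclideanSpace.norm_single]
    rw [h2, mul_one] at h1
    exact le_trans (norm_nonneg _) h1
  have hM0 : 0 ≤ M := le_trans hL0 hM
  -- derivatives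
  set D1 : EuclideanSpace ℝ (Fin n) → (EuclideanSpace ℝ (Fin n) →L[ℝ] ℝ) := fderiv ℝ f with hD1
  set D2 : EuclideanSpace ℝ (Fin n) → (EuclideanSpace ℝ (Fin n) →L[ℝ] (EuclideanSpace ℝ (Fin n) →L[ℝ] ℝ)) := fderiv ℝ D1 with hD2
  set D3 : EuclideanSpace ℝ (Fin n) → (EuclideanSpace ℝ (Fin n) →L[ℝ] (EuclideanSpace ℝ (Fin n) →L[ℝ] (EuclideanSpace ℝ (Fin n) →L[ℝ] ℝ))) := fderiv ℝ D2 with hD3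
  have hdf : Differentiable ℝ f := hf.differentiable (by norm_num)
  have hf1 : ContDiff ℝ 2 D1 := hf.fderiv_right (by norm_num)
  have hd1 : Differentiable ℝ D1 := hf1.differentiable (by norm_num)
  have hf2 : ContDiff ℝ 1 D2 := hf1.fderiv_right (by norm_num)
  have hd2 : Differentiable ℝ D2 := hf2.differentiable (by norm_num)
  -- iterated derivative apply lemmas
  have iFD2_apply : ∀ (y : EuclideanSpace ℝ (Fin n)) (m : Fin 2 → EuclideanSpace ℝ (Fin n)),
      iteratedFDeriv ℝ 2 f y m = D2 y (m 0) (m 1) := by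
    intro y m; rw [iteratedFDeriv_two_apply]
  have iFD3_apply : ∀ (y : EuclideanSpace ℝ (Fin n)) (m : Fin 3 → EuclideanSpace ℝ (Fin n)),
      iteratedFDeriv ℝ 3 f y m = D3 y (m 0) (m 1) (m 2) := by
    intro y m
    calc iteratedFDeriv ℝ 3 f y m
        = iteratedFDeriv ℝ 2 (fderiv ℝ f) y (Fin.init m) (m (Fin.last 2)) :=
          iteratedFDeriv_succ_apply_right m
      _ = D3 y (m 0) (m 1) (m 2) := by rw [iteratedFDeriv_two_apply]; rfl
  -- line derivative helper
  have hline : ∀ (z d : EuclideanSpace ℝ (Fin n)) (t : ℝ), HasDerivAt (fun s : ℝ => z + s • d) d t := by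
    intro z d t
    simpa using ((hasDerivAt_id t).smul_const d).const_add z
  -- symmetry of second derivative (at every point)
  have sym2 : ∀ (y : EuclideanSpace ℝ (Fin n)) (v w : EuclideanSpace ℝ (Fin n)), D2 y v w = D2 y w v := by
    intro y v w
    exact second_derivative_symmetric (fun z => (hdf z).hasFDerivAt) ((hd1 y).hasFDerivAt) v w
  -- D3 y u v w = fderiv of (z ↦ D2 z v w) at y in direction u
  have hd3evalt : ∀ (y u v w : EuclideanSpace ℝ (Fin n)) (t : ℝ),
      HasDerivAt (fun s : ℝ => D2 (y + s • u) v w) (D3 (y + t • u) u v w) t := by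
    intro y u v w t
    set T : (EuclideanSpace ℝ (Fin n) →L[ℝ] (EuclideanSpace ℝ (Fin n) →L[ℝ] ℝ)) →L[ℝ] ℝ :=
      (ContinuousLinearMap.apply ℝ ℝ w).comp
        (ContinuousLinearMap.apply ℝ (EuclideanSpace ℝ (Fin n) →L[ℝ] ℝ) v) with hT
    have hc : HasFDerivAt (⇑T ∘ D2) (T.comp (D3 (y + t • u))) (y + t • u) := by
      rw [hD3]
      exact T.hasFDerivAt.comp (y + t • u) (f' := fderiv ℝ D2 (y + t • u)) ((hd2 (y + t • u)).hasFDerivAt)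
    have hcomp := hc.comp_hasDerivAt t (hline y u t)
    exact hcomp
  -- symmetry of third derivative: swap last two
  have sym23 : ∀ (y u v w : EuclideanSpace ℝ (Fin n)), D3 y u v w = D3 y u w v := by
    intro y u v w
    have h1 := hd3evalt y u v w 0
    have h2 := hd3evalt y u w v 0
    rw [show y + (0:ℝ) • u = y by simp] at h1 h2
    have : (fun s : ℝ => D2 (y + s • u) v w) = (fun s : ℝ => D2 (y + s • u) w v) := by
      funext s; exact sym2 _ v w
    rw [this] at h1
    exact h1.unique h2
  -- symmetry of third derivative: swap first two
  have sym12 : ∀ (y u v w : EuclideanSpace ℝ (Fin n)), D3 y u v w = D3 y v u w := by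
    intro y u v w
    have := second_derivative_symmetric (f := D1) (f' := D2) (f'' := D3 y)
      (fun z => (hd1 z).hasFDerivAt) ((hd2 y).hasFDerivAt) u v
    exact congrArg (fun (T : EuclideanSpace ℝ (Fin n) →L[ℝ] ℝ) => T w) this
  -- Lipschitz bound on D3
  have hLip : ∀ (y u v w : EuclideanSpace ℝ (Fin n)),
      |D3 y u v w - D3 xt u v w| ≤ L * ‖y - xt‖ * (‖u‖ * ‖v‖ * ‖w‖) := by
    intro y u v w
    have h2 := (iteratedFDeriv ℝ 3 f y - iteratedFDeriv ℝ 3 f xt).le_opNorm ![u, v, w]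
    have h3 : (iteratedFDeriv ℝ 3 f y - iteratedFDeriv ℝ 3 f xt) ![u, v, w]
        = D3 y u v w - D3 xt u v w := by
      rw [ContinuousMultilinearMap.sub_apply, iFD3_apply, iFD3_apply]
      simp
    have h4 : ∏ i, ‖(![u, v, w] : Fin 3 → EuclideanSpace ℝ (Fin n)) i‖ = ‖u‖ * ‖v‖ * ‖w‖ := by
      rw [Fin.prod_univ_three]; simp
    rw [h3, h4] at h2
    rw [← Real.norm_eq_abs]
    refine h2.trans ?_
    have := hL y xt
    have hnn : 0 ≤ ‖u‖ * ‖v‖ * ‖w‖ := by positivity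
    exact mul_le_mul_of_nonneg_right this hnn
  -- convexity: 0 ≤ D2 z d d for all z d
  have hd2evalt : ∀ (y u : EuclideanSpace ℝ (Fin n)) (t : ℝ),
      HasDerivAt (fun s : ℝ => D1 (y + s • u) u) (D2 (y + t • u) u u) t := by
    intro y u t
    set T : (EuclideanSpace ℝ (Fin n) →L[ℝ] ℝ) →L[ℝ] ℝ :=
      ContinuousLinearMap.apply ℝ ℝ u with hT
    have hc : HasFDerivAt (⇑T ∘ D1) (T.comp (D2 (y + t • u))) (y + t • u) := by
      rw [hD2]
      exact T.hasFDerivAt.comp (y + t • u) ((hd1 (y + t • u)).hasFDerivAt)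
    exact hc.comp_hasDerivAt t (hline y u t)
  have hD2nonneg : ∀ (z d : EuclideanSpace ℝ (Fin n)), 0 ≤ D2 z d d := by
    intro z d
    have g0conv : ConvexOn ℝ (Set.univ : Set ℝ) (fun t : ℝ => f (z + t • d)) := by
      refine ⟨convex_univ, ?_⟩
      intro s _ t _ a b ha hb hab
      simp only [smul_eq_mul]
      have hcomb : z + (a * s + b * t) • d = a • (z + s • d) + b • (z + t • d) := by
        have h1 : a • (z + s • d) + b • (z + t • d)
            = (a + b) • z + (a * s + b * t) • d := by module
        rw [h1, hab, one_smul]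
      rw [hcomb]
      exact hconv.2 (Set.mem_univ _) (Set.mem_univ _) ha hb hab
    have gd : ∀ t : ℝ, HasDerivAt (fun t : ℝ => f (z + t • d)) (D1 (z + t • d) d) t := by
      intro t
      have h1 := ((hdf (z + t • d)).hasFDerivAt).comp_hasDerivAt t (hline z d t)
      exact h1
    have hmono : Monotone (fun t : ℝ => D1 (z + t • d) d) := by
      have hderiv : ∀ t : ℝ, deriv (fun t : ℝ => f (z + t • d)) t = D1 (z + t • d) d :=
        fun t => (gd t).deriv
      have hm := g0conv.monotoneOn_deriv (fun t _ => (gd t).differentiableAt)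
      intro s t hst
      have h2 := hm (Set.mem_univ s) (Set.mem_univ t) hst
      rwa [hderiv s, hderiv t] at h2
    have hD : HasDerivAt (fun t : ℝ => D1 (z + t • d) d) (D2 z d d) 0 := by
      have := hd2evalt z d 0
      rwa [show z + (0:ℝ) • d = z by simp] at this
    have hslope := hasDerivAt_iff_tendsto_slope.mp hD
    have hsub : Set.Ioi (0:ℝ) ⊆ {(0:ℝ)}ᶜ := fun y hy => ne_of_gt hy
    have hslope' := hslope.mono_left (nhdsWithin_mono 0 hsub)
    refine ge_of_tendsto hslope' ?_
    filter_upwards [self_mem_nhdsWithin] with t ht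
    have h5 : D1 (z + (0:ℝ) • d) d ≤ D1 (z + t • d) d := hmono (le_of_lt ht)
    rw [slope_def_field]
    apply div_nonneg
    · simpa using sub_nonneg.mpr h5
    · simpa using le_of_lt ht
  -- Taylor bound: D2 (xt+w) d d ≤ D2 xt d d + D3 xt w d d + L ‖w‖² ‖d‖²
  have hTaylor : ∀ (w d : EuclideanSpace ℝ (Fin n)),
      D2 (xt + w) d d ≤ D2 xt d d + D3 xt w d d + L * (‖w‖^2 * ‖d‖^2) := by
    intro w d
    set c : ℝ := D3 xt w d d with hcdef
    set G : ℝ → ℝ := fun s => D2 (xt + s • w) d d - s * c with hGdef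
    have hG' : ∀ s : ℝ, HasDerivAt G (D3 (xt + s • w) w d d - c) s := by
      intro s
      have h1 := hd3evalt xt w d d s
      have h2 : HasDerivAt (fun s : ℝ => s * c) c s := by
        simpa using (hasDerivAt_id s).mul_const c
      exact h1.sub h2
    have bound : ∀ s ∈ Set.Ico (0:ℝ) 1,
        ‖D3 (xt + s • w) w d d - c‖ ≤ L * (‖w‖^2 * ‖d‖^2) := by
      intro s hs
      rw [Real.norm_eq_abs]
      have h1 := hLip (xt + s • w) w d d
      rw [show xt + s • w - xt = s • w by abel, norm_smul, Real.norm_eq_abs] at h1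
      rw [abs_of_nonneg hs.1] at h1
      refine h1.trans ?_
      have hs1 : s ≤ 1 := le_of_lt hs.2
      have hw : (0:ℝ) ≤ ‖w‖ := norm_nonneg w
      have hdn : (0:ℝ) ≤ ‖d‖ := norm_nonneg d
      have key1 : L * (s * ‖w‖) * (‖w‖ * ‖d‖ * ‖d‖) = s * (L * (‖w‖^2 * ‖d‖^2)) := by ring
      have key2 : (0:ℝ) ≤ L * (‖w‖^2 * ‖d‖^2) := by positivity
      rw [key1]
      calc s * (L * (‖w‖^2 * ‖d‖^2)) ≤ 1 * (L * (‖w‖^2 * ‖d‖^2)) :=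
            mul_le_mul_of_nonneg_right hs1 key2
        _ = L * (‖w‖^2 * ‖d‖^2) := one_mul _
    have hmv := norm_image_sub_le_of_norm_deriv_le_segment_01'
      (fun s _ => (hG' s).hasDerivWithinAt) bound
    have hG1 : G 1 = D2 (xt + w) d d - c := by
      rw [hGdef]; simp
    have hG0 : G 0 = D2 xt d d := by
      rw [hGdef]; simp
    rw [hG1, hG0, Real.norm_eq_abs] at hmv
    have := (abs_le.mp hmv).2
    linarith
  -- key nonnegativity
  have key : ∀ (w d : EuclideanSpace ℝ (Fin n)),
      0 ≤ D2 xt d d + D3 xt w d d + M * (2 * ⟪w, d⟫^2 + ‖w‖^2 * ‖d‖^2) := by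
    intro w d
    have h1 := hD2nonneg (xt + w) d
    have h2 := hTaylor w d
    have h3 : 0 ≤ ⟪w, d⟫^2 := sq_nonneg _
    have h4 : 0 ≤ ‖w‖^2 * ‖d‖^2 := by positivity
    nlinarith [mul_le_mul_of_nonneg_right hM h4]
  -- main convexity proof
  refine ⟨convex_univ, ?_⟩
  intro x _ y _ a b ha hb hab
  set d : EuclideanSpace ℝ (Fin n) := y - x with hd
  set h : EuclideanSpace ℝ (Fin n) := x - xt with hh
  set g : EuclideanSpace ℝ (Fin n) := gradient f xt with hg
  -- polynomial coefficients
  set k0 : ℝ := ⟪g, h⟫ + (1/2) * D2 xt h h + (1/6) * D3 xt h h h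
      + M/4 * (‖h‖^2)^2 with hk0
  set k1 : ℝ := ⟪g, d⟫ + D2 xt h d + (1/2) * D3 xt h h d
      + M/4 * (2 * ‖h‖^2 * (2*⟪h, d⟫)) with hk1
  set k2 : ℝ := (1/2) * D2 xt d d + (1/2) * D3 xt h d d
      + M/4 * ((2*⟪h, d⟫)^2 + 2 * ‖h‖^2 * ‖d‖^2) with hk2
  set k3 : ℝ := (1/6) * D3 xt d d d + M/4 * (2 * (2*⟪h, d⟫) * ‖d‖^2) with hk3
  set k4 : ℝ := M/4 * (‖d‖^2)^2 with hk4
  set ψ : ℝ → ℝ := fun t => φ (x + t • d) with hψ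
  have hn2 : ∀ s : ℝ, ‖h + s • d‖^2 = ‖h‖^2 + (2*⟪h, d⟫)*s + ‖d‖^2*s^2 := by
    intro s
    rw [norm_add_sq_real, real_inner_smul_right, norm_smul, Real.norm_eq_abs, mul_pow, sq_abs]
    ring
  have hψ_eq : ∀ t : ℝ, ψ t = k0 + k1*t + k2*t^2 + k3*t^3 + k4*t^4 := by
    intro t
    have hvec : x + t • d - xt = h + t • d := by rw [hh]; abel
    have e2 : D2 xt (h + t • d) (h + t • d)
        = D2 xt h h + (2*t) * D2 xt h d + t^2 * D2 xt d d := by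
      simp only [map_add, map_smul, ContinuousLinearMap.add_apply,
        ContinuousLinearMap.smul_apply, smul_eq_mul]
      rw [sym2 xt d h]
      ring
    have e3 : D3 xt (h + t • d) (h + t • d) (h + t • d)
        = D3 xt h h h + (3*t) * D3 xt h h d + (3*t^2) * D3 xt h d d
          + t^3 * D3 xt d d d := by
      simp only [map_add, map_smul, ContinuousLinearMap.add_apply,
        ContinuousLinearMap.smul_apply, smul_eq_mul]
      rw [show D3 xt h d h = D3 xt h h d from sym23 xt h d h,
          show D3 xt d h h = D3 xt h h d from (sym12 xt d h h).trans (sym23 xt h d h),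
          show D3 xt d h d = D3 xt h d d from sym12 xt d h d,
          show D3 xt d d h = D3 xt h d d from (sym23 xt d d h).trans (sym12 xt d h d)]
      ring
    have hn4 : ‖h + t • d‖^4 = (‖h‖^2 + (2*⟪h, d⟫)*t + ‖d‖^2*t^2)^2 := by
      rw [show (4:ℕ) = 2*2 from rfl, pow_mul, hn2 t]
    simp only [hψ, hφ]
    rw [hvec]
    simp only [iFD2_apply, iFD3_apply]
    rw [e2, e3, hn4, inner_add_right, real_inner_smul_right, hk0, hk1, hk2, hk3, hk4]
    ring
  have hnn : ∀ t : ℝ, 0 ≤ 2*k2 + 6*k3*t + 12*k4*t^2 := by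
    intro t
    have hk := key (h + t • d) d
    have i1 : ⟪h + t • d, d⟫ = ⟪h, d⟫ + t * ‖d‖^2 := by
      rw [inner_add_left, real_inner_smul_left, real_inner_self_eq_norm_sq]
    have i3 : D3 xt (h + t • d) d d = D3 xt h d d + t * D3 xt d d d := by
      simp only [map_add, map_smul, ContinuousLinearMap.add_apply,
        ContinuousLinearMap.smul_apply, smul_eq_mul]
    rw [i1, i3, hn2 t] at hk
    have e : 2*k2 + 6*k3*t + 12*k4*t^2
        = D2 xt d d + (D3 xt h d d + t * D3 xt d d d)
          + M * (2*(⟪h, d⟫ + t*‖d‖^2)^2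
            + (‖h‖^2 + (2*⟪h, d⟫)*t + ‖d‖^2*t^2)*‖d‖^2) := by
      rw [hk2, hk3, hk4]; ring
    linarith [hk, e]
  have hderiv1 : ∀ t : ℝ, HasDerivAt ψ (k1 + 2*k2*t + 3*k3*t^2 + 4*k4*t^3) t := by
    have hfun : ψ = fun t : ℝ => k0 + k1*t + k2*t^2 + k3*t^3 + k4*t^4 := funext hψ_eq
    intro t
    rw [hfun]
    have H := ((((hasDerivAt_const t k0).add ((hasDerivAt_id t).const_mul k1)).add
      ((hasDerivAt_pow 2 t).const_mul k2)).add
      ((hasDerivAt_pow 3 t).const_mul k3)).add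
      ((hasDerivAt_pow 4 t).const_mul k4)
    exact H.congr_deriv (by push_cast; ring)
  have hderiv2 : ∀ t : ℝ,
      HasDerivAt (fun t : ℝ => k1 + 2*k2*t + 3*k3*t^2 + 4*k4*t^3)
        (2*k2 + 6*k3*t + 12*k4*t^2) t := by
    intro t
    have H := (((hasDerivAt_const t k1).add ((hasDerivAt_id t).const_mul (2*k2))).add
      ((hasDerivAt_pow 2 t).const_mul (3*k3))).add
      ((hasDerivAt_pow 3 t).const_mul (4*k4))
    exact H.congr_deriv (by push_cast; ring)
  have hψconv : ConvexOn ℝ (Set.univ : Set ℝ) ψ :=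
    convexOn_of_hasDerivWithinAt2_nonneg convex_univ
      (fun t _ => (hderiv1 t).continuousAt.continuousWithinAt)
      (fun t _ => (hderiv1 t).hasDerivWithinAt)
      (fun t _ => (hderiv2 t).hasDerivWithinAt)
      (fun t _ => hnn t)
  -- conclude
  have hcombo : a • x + b • y = x + b • d := by
    have : a = 1 - b := by linarith
    subst this
    rw [hd]
    module
  have h0 : ψ 0 = φ x := by rw [hψ]; norm_num
  have h1 : ψ 1 = φ y := by
    rw [hψ]; norm_num [hd]
  have hcv := hψconv.2 (Set.mem_univ (0:ℝ)) (Set.mem_univ (1:ℝ)) ha hb hab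
  simp only [smul_eq_mul, mul_zero, mul_one, zero_add] at hcv
  calc φ (a • x + b • y) = ψ b := by rw [hcombo]
    _ ≤ a * ψ 0 + b * ψ 1 := hcv
    _ = a * φ x + b * φ y := by rw [h0, h1]
end
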